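/- Let ρ be a probability measure on the circle 𝕋 and σ_n = f_n dρ a sequence of probability measures converging weakly to a probability measure τ, with each f_n > 0 τ-a.e. and sup_n ∫ (1/f_n) dτ < ∞. Then τ ⊥ ρ if and only if lim_{n→∞} ∫ √(f_n) dρ = 0. -/

import Mathlib

set_option maxHeartbeats 1000000


open MeasureTheory Filter Topology Real
open scoped ENNReal

section Helpers

variable {α : Type*} [MeasurableSpace α] {μ : Measure α}

private lemma my_sqrt_add {a b : ℝ} (ha : 0 ≤ a) (hb : 0 ≤ b) :
    Real.sqrt (a + b) ≤ Real.sqrt a + Real.sqrt b := by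
  have h : a + b ≤ (Real.sqrt a + Real.sqrt b) ^ 2 := by
    nlinarith [Real.sq_sqrt ha, Real.sq_sqrt hb, Real.sqrt_nonneg a, Real.sqrt_nonneg b]
  calc Real.sqrt (a + b) ≤ Real.sqrt ((Real.sqrt a + Real.sqrt b) ^ 2) := Real.sqrt_le_sqrt h
    _ = Real.sqrt a + Real.sqrt b := Real.sqrt_sq (by positivity)

private lemma my_integrable_sqrt [IsFiniteMeasure μ] {u : α → ℝ} (hm : AEMeasurable u μ)
    (h0 : ∀ᵐ x ∂μ, 0 ≤ u x) (hi : Integrable u μ) :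
    Integrable (fun x => Real.sqrt (u x)) μ := by
  refine Integrable.mono' ((integrable_const (1:ℝ)).add hi)
    ((Real.continuous_sqrt.measurable.comp_aemeasurable hm).aestronglyMeasurable) ?_
  filter_upwards [h0] with x hx
  rw [Real.norm_eq_abs, abs_of_nonneg (Real.sqrt_nonneg _)]
  simp only [Pi.add_apply]
  nlinarith [Real.sq_sqrt hx, Real.sqrt_nonneg (u x)]

private lemma my_cs_lintegral (a b : α → ℝ≥0∞) (ha : AEMeasurable a μ) (hb : AEMeasurable b μ) :
    ∫⁻ x, a x ^ (1/2:ℝ) * b x ^ (1/2:ℝ) ∂μ ≤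
      (∫⁻ x, a x ∂μ) ^ (1/2:ℝ) * (∫⁻ x, b x ∂μ) ^ (1/2:ℝ) := by
  have hconj : (2:ℝ).HolderConjugate 2 := by rw [Real.holderConjugate_iff]; constructor <;> norm_num
  have := ENNReal.lintegral_mul_le_Lp_mul_Lq μ hconj
    (f := fun x => a x ^ (1/2:ℝ)) (g := fun x => b x ^ (1/2:ℝ))
    (ha.pow_const _) (hb.pow_const _)
  simp only [Pi.mul_apply] at this
  have h2 : ∀ c : ℝ≥0∞, (c ^ (1/2:ℝ)) ^ (2:ℝ) = c := by
    intro c; rw [← ENNReal.rpow_mul]; norm_num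
  calc ∫⁻ x, a x ^ (1/2:ℝ) * b x ^ (1/2:ℝ) ∂μ
      ≤ (∫⁻ x, (a x ^ (1/2:ℝ)) ^ (2:ℝ) ∂μ) ^ (1/(2:ℝ)) *
        (∫⁻ x, (b x ^ (1/2:ℝ)) ^ (2:ℝ) ∂μ) ^ (1/(2:ℝ)) := this
    _ = (∫⁻ x, a x ∂μ) ^ (1/2:ℝ) * (∫⁻ x, b x ∂μ) ^ (1/2:ℝ) := by
        simp only [h2]

private lemma my_lintegral_sqrt_eq [IsFiniteMeasure μ] {u : α → ℝ} (hm : AEMeasurable u μ)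
    (h0 : ∀ᵐ x ∂μ, 0 ≤ u x) (hi : Integrable u μ) :
    ∫⁻ x, (ENNReal.ofReal (u x)) ^ (1/2:ℝ) ∂μ = ENNReal.ofReal (∫ x, Real.sqrt (u x) ∂μ) := by
  rw [ofReal_integral_eq_lintegral_ofReal (my_integrable_sqrt hm h0 hi)
    (Eventually.of_forall fun x => Real.sqrt_nonneg _)]
  refine lintegral_congr_ae ?_
  filter_upwards [h0] with x hx
  rw [Real.sqrt_eq_rpow, ENNReal.ofReal_rpow_of_nonneg hx (by norm_num)]

private lemma my_real_cs {a b : α → ℝ} (ham : AEMeasurable a μ) (hbm : AEMeasurable b μ)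
    (ha0 : ∀ᵐ x ∂μ, 0 ≤ a x) (hb0 : ∀ᵐ x ∂μ, 0 ≤ b x)
    (hai : Integrable a μ) (hbi : Integrable b μ) :
    ∫ x, Real.sqrt (a x) * Real.sqrt (b x) ∂μ ≤
      Real.sqrt (∫ x, a x ∂μ) * Real.sqrt (∫ x, b x ∂μ) := by
  have hL : ∫ x, Real.sqrt (a x) * Real.sqrt (b x) ∂μ
      = (∫⁻ x, ENNReal.ofReal (Real.sqrt (a x) * Real.sqrt (b x)) ∂μ).toReal :=
    integral_eq_lintegral_of_nonneg_ae
      (Eventually.of_forall fun x => mul_nonneg (Real.sqrt_nonneg _) (Real.sqrt_nonneg _))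
      (((Real.continuous_sqrt.measurable.comp_aemeasurable ham).mul
        (Real.continuous_sqrt.measurable.comp_aemeasurable hbm)).aestronglyMeasurable)
  have hcongr : ∫⁻ x, ENNReal.ofReal (Real.sqrt (a x) * Real.sqrt (b x)) ∂μ
      = ∫⁻ x, (ENNReal.ofReal (a x)) ^ (1/2:ℝ) * (ENNReal.ofReal (b x)) ^ (1/2:ℝ) ∂μ := by
    refine lintegral_congr_ae ?_
    filter_upwards [ha0, hb0] with x hxa hxb
    rw [ENNReal.ofReal_mul (Real.sqrt_nonneg _), Real.sqrt_eq_rpow, Real.sqrt_eq_rpow,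
      ENNReal.ofReal_rpow_of_nonneg hxa (by norm_num),
      ENNReal.ofReal_rpow_of_nonneg hxb (by norm_num)]
  have hle : ∫⁻ x, (ENNReal.ofReal (a x)) ^ (1/2:ℝ) * (ENNReal.ofReal (b x)) ^ (1/2:ℝ) ∂μ ≤
      (∫⁻ x, ENNReal.ofReal (a x) ∂μ) ^ (1/2:ℝ) * (∫⁻ x, ENNReal.ofReal (b x) ∂μ) ^ (1/2:ℝ) :=
    my_cs_lintegral _ _ ham.ennreal_ofReal hbm.ennreal_ofReal
  rw [← ofReal_integral_eq_lintegral_ofReal hai ha0,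
      ← ofReal_integral_eq_lintegral_ofReal hbi hb0] at hle
  have ha' : 0 ≤ ∫ x, a x ∂μ := integral_nonneg_of_ae ha0
  have hb' : 0 ≤ ∫ x, b x ∂μ := integral_nonneg_of_ae hb0
  have hrhs : (ENNReal.ofReal (∫ x, a x ∂μ)) ^ (1/2:ℝ) * (ENNReal.ofReal (∫ x, b x ∂μ)) ^ (1/2:ℝ)
      = ENNReal.ofReal (Real.sqrt (∫ x, a x ∂μ) * Real.sqrt (∫ x, b x ∂μ)) := by
    rw [ENNReal.ofReal_mul (Real.sqrt_nonneg _), Real.sqrt_eq_rpow, Real.sqrt_eq_rpow,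
      ENNReal.ofReal_rpow_of_nonneg ha' (by norm_num),
      ENNReal.ofReal_rpow_of_nonneg hb' (by norm_num)]
  rw [hrhs] at hle
  rw [hL, hcongr]
  calc (∫⁻ x, (ENNReal.ofReal (a x)) ^ (1/2:ℝ) * (ENNReal.ofReal (b x)) ^ (1/2:ℝ) ∂μ).toReal
      ≤ (ENNReal.ofReal (Real.sqrt (∫ x, a x ∂μ) * Real.sqrt (∫ x, b x ∂μ))).toReal :=
        ENNReal.toReal_mono ENNReal.ofReal_ne_top hle
    _ = Real.sqrt (∫ x, a x ∂μ) * Real.sqrt (∫ x, b x ∂μ) :=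
        ENNReal.toReal_ofReal (mul_nonneg (Real.sqrt_nonneg _) (Real.sqrt_nonneg _))

private lemma my_jensen_sqrt [IsProbabilityMeasure μ] {a : α → ℝ} (ham : AEMeasurable a μ)
    (ha0 : ∀ᵐ x ∂μ, 0 ≤ a x) (hai : Integrable a μ) :
    ∫ x, Real.sqrt (a x) ∂μ ≤ Real.sqrt (∫ x, a x ∂μ) := by
  have := my_real_cs ham (aemeasurable_const (b := (1:ℝ)))
    ha0 (Eventually.of_forall fun _ => zero_le_one) hai (integrable_const 1)
  simpa using this

private lemma my_aux1 {a b : ℝ≥0∞} (ha : a ≠ ⊤) :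
    a * b ^ (-(1/2):ℝ) ≤ (a * b⁻¹) ^ (1/2:ℝ) * a ^ (1/2:ℝ) := by
  rcases eq_or_ne a 0 with rfl | ha0
  · simp [ENNReal.zero_rpow_of_pos (by norm_num : (0:ℝ) < 1/2)]
  rcases eq_or_ne b 0 with rfl | hb0
  · have h1 : (a * (0:ℝ≥0∞)⁻¹) = ⊤ := by
      rw [ENNReal.inv_zero, ENNReal.mul_top ha0]
    have hra : a ^ (1/2:ℝ) ≠ 0 := by
      simp [ENNReal.rpow_eq_zero_iff, ha0, ha]
    rw [h1, ENNReal.top_rpow_of_pos (by norm_num), ENNReal.top_mul hra]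
    exact le_top
  · refine le_of_eq ?_
    rw [ENNReal.mul_rpow_of_nonneg _ _ (by norm_num : (0:ℝ) ≤ 1/2),
      ← ENNReal.rpow_neg_one b, ← ENNReal.rpow_mul, mul_right_comm,
      ← ENNReal.rpow_add _ _ ha0 ha]
    norm_num [mul_comm]

private lemma my_aux2 {a b : ℝ≥0∞} (ha : a ≠ ⊤) (hb : b ≠ ⊤) (hab : a ≠ 0 → b ≠ 0) :
    a ^ (1/2:ℝ) ≤ (a * b ^ (-(1/2):ℝ)) ^ (1/2:ℝ) * (b ^ (1/2:ℝ)) ^ (1/2:ℝ) := by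
  rcases eq_or_ne a 0 with rfl | ha0
  · simp [ENNReal.zero_rpow_of_pos (by norm_num : (0:ℝ) < 1/2)]
  have hb0 := hab ha0
  refine le_of_eq ?_
  rw [ENNReal.mul_rpow_of_nonneg _ _ (by norm_num : (0:ℝ) ≤ 1/2),
    ← ENNReal.rpow_mul, ← ENNReal.rpow_mul, mul_assoc,
    ← ENNReal.rpow_add _ _ hb0 hb]
  norm_num

end Helpers

/-- Let `ρ` be a probability measure on the circle and `σ_n = f_n dρ`
probability measures converging weakly to a probability measure `τ`, with `f_n > 0`
τ-a.e. and `sup_n ∫ 1/f_n dτ < ∞`. Then `τ ⊥ ρ` iff `∫ √f_n dρ → 0`. -/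
theorem singular_iff_sqrt_tendsto_zero
    (ρ τ : Measure (AddCircle (1:ℝ)))
    [IsProbabilityMeasure ρ] [IsProbabilityMeasure τ]
    (f : ℕ → AddCircle (1:ℝ) → ℝ)
    (hf_meas : ∀ n, Measurable (f n))
    (hf_nonneg : ∀ n, ∀ᵐ x ∂ρ, 0 ≤ f n x)
    (hf_int : ∀ n, Integrable (f n) ρ)
    (hf_prob : ∀ n, ∫ x, f n x ∂ρ = 1)
    (hweak : ∀ g : C(AddCircle (1:ℝ), ℝ),
      Tendsto (fun n => ∫ x, g x * f n x ∂ρ) atTop (𝓝 (∫ x, g x ∂τ)))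
    (hf_pos : ∀ n, ∀ᵐ x ∂τ, 0 < f n x)
    (M : ℝ) (hM : ∀ n, ∫⁻ x, ENNReal.ofReal (f n x)⁻¹ ∂τ ≤ ENNReal.ofReal M) :
    Measure.MutuallySingular τ ρ ↔
      Tendsto (fun n => ∫ x, Real.sqrt (f n x) ∂ρ) atTop (𝓝 0) := by
  constructor
  · -- forward direction
    intro hsing
    rw [Metric.tendsto_atTop]
    intro ε hε
    set δ := ε^2/16 with hδdef
    have hδ : 0 < δ := by positivity
    obtain ⟨s, hs, hτs, hρs⟩ := hsing
    have hτsc : τ sᶜ = 1 := by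
      rw [measure_compl hs (measure_ne_top τ s), hτs, measure_univ]; simp
    obtain ⟨K, hKs, hKc, hK⟩ := hs.compl.exists_isCompact_lt_add (measure_ne_top τ _)
      (ε := ENNReal.ofReal δ) (ENNReal.ofReal_pos.mpr hδ).ne'
    have hρK : ρ K = 0 :=
      le_antisymm (le_trans (measure_mono hKs) hρs.le) zero_le
    obtain ⟨U, hKU, hUo, hU⟩ := Set.exists_isOpen_lt_add K (measure_ne_top ρ K)
      (ENNReal.ofReal_pos.mpr hδ).ne'
    have hρU : ρ U < ENNReal.ofReal δ := by rwa [hρK, zero_add] at hU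
    obtain ⟨g, hg0, hg1, hg01⟩ := exists_continuous_zero_one_of_isClosed
      hUo.isClosed_compl hKc.isClosed
      (Set.disjoint_left.mpr fun x hx hxK => hx (hKU hxK))
    have hgnn : ∀ x, 0 ≤ g x := fun x => (hg01 x).1
    have hgle1 : ∀ x, g x ≤ 1 := fun x => (hg01 x).2
    have hgint_ρ : Integrable (⇑g) ρ := by
      refine Integrable.mono' (integrable_const (1:ℝ))
        g.continuous.measurable.aestronglyMeasurable (Eventually.of_forall fun x => ?_)
      rw [Real.norm_eq_abs, abs_of_nonneg (hgnn x)]; exact hgle1 x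
    have hgint_τ : Integrable (⇑g) τ := by
      refine Integrable.mono' (integrable_const (1:ℝ))
        g.continuous.measurable.aestronglyMeasurable (Eventually.of_forall fun x => ?_)
      rw [Real.norm_eq_abs, abs_of_nonneg (hgnn x)]; exact hgle1 x
    -- ∫ g dρ ≤ δ
    have hgρ : ∫ x, g x ∂ρ ≤ δ := by
      have h1 : ∫ x, g x ∂ρ ≤ ∫ x, U.indicator (fun _ => (1:ℝ)) x ∂ρ := by
        refine integral_mono hgint_ρ ((integrable_const (1:ℝ)).indicator hUo.measurableSet) ?_
        intro x
        by_cases hx : x ∈ U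
        · simp [Set.indicator_of_mem hx, hgle1 x]
        · have h := hg0 (by simpa using hx : x ∈ Uᶜ)
          simp only [Pi.zero_apply] at h
          simp [Set.indicator_of_notMem hx, h]
      rw [integral_indicator_const (1:ℝ) hUo.measurableSet] at h1
      simp only [smul_eq_mul, mul_one] at h1
      exact h1.trans (ENNReal.toReal_le_of_le_ofReal hδ.le hρU.le)
    -- ∫ (1-g) dτ ≤ δ
    have hτK : (1:ℝ) ≤ (τ K).toReal + δ := by
      have h1 : (1:ℝ≥0∞) ≤ τ K + ENNReal.ofReal δ := by rw [← hτsc]; exact hK.le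
      have h2 := ENNReal.toReal_mono (by finiteness) h1
      rwa [ENNReal.toReal_one, ENNReal.toReal_add (measure_ne_top τ K) ENNReal.ofReal_ne_top,
        ENNReal.toReal_ofReal hδ.le] at h2
    have hgτ : ∫ x, (1 - g x) ∂τ ≤ δ := by
      have h1 : ∫ x, K.indicator (fun _ => (1:ℝ)) x ∂τ ≤ ∫ x, g x ∂τ := by
        refine integral_mono ((integrable_const (1:ℝ)).indicator hKc.measurableSet) hgint_τ ?_
        intro x
        by_cases hx : x ∈ K
        · have h := hg1 hx
          simp only [Pi.one_apply] at h
          simp [Set.indicator_of_mem hx, h]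
        · simp [Set.indicator_of_notMem hx, hgnn x]
      rw [integral_indicator_const (1:ℝ) hKc.measurableSet] at h1
      simp only [smul_eq_mul, mul_one] at h1
      have h2 : ∫ x, (1 - g x) ∂τ = 1 - ∫ x, g x ∂τ := by
        rw [integral_sub (integrable_const 1) hgint_τ]
        simp
      rw [h2]
      rw [measureReal_def] at h1; linarith
    -- weak convergence applied to 1 - g
    have hw := hweak ((1 : C(AddCircle (1:ℝ), ℝ)) - g)
    simp only [ContinuousMap.sub_apply, ContinuousMap.one_apply] at hw
    have hev : ∀ᶠ n in atTop, ∫ x, (1 - g x) * f n x ∂ρ < 2*δ :=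
      hw.eventually_lt_const (by linarith)
    obtain ⟨N, hN⟩ := eventually_atTop.mp hev
    refine ⟨N, fun n hn => ?_⟩
    have hbound := hN n hn
    have hu0 : ∀ᵐ x ∂ρ, 0 ≤ (1 - g x) * f n x :=
      (hf_nonneg n).mono fun x hx => mul_nonneg (by linarith [hgle1 x]) hx
    have humeas : AEMeasurable (fun x => (1 - g x) * f n x) ρ :=
      ((measurable_const.sub g.continuous.measurable).mul (hf_meas n)).aemeasurable
    have hui : Integrable (fun x => (1 - g x) * f n x) ρ := by
      refine (hf_int n).bdd_mul (c := 1)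
        (measurable_const.sub g.continuous.measurable).aestronglyMeasurable
        (Eventually.of_forall fun x => ?_)
      rw [Real.norm_eq_abs, abs_le]
      constructor <;> [linarith [hgle1 x]; linarith [hgnn x]]
    have hgf0 : ∀ᵐ x ∂ρ, 0 ≤ g x * f n x :=
      (hf_nonneg n).mono fun x hx => mul_nonneg (hgnn x) hx
    have hgfmeas : AEMeasurable (fun x => g x * f n x) ρ :=
      (g.continuous.measurable.mul (hf_meas n)).aemeasurable
    have hgfi : Integrable (fun x => g x * f n x) ρ := by
      refine (hf_int n).bdd_mul (c := 1)
        g.continuous.measurable.aestronglyMeasurable (Eventually.of_forall fun x => ?_)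
      rw [Real.norm_eq_abs, abs_of_nonneg (hgnn x)]; exact hgle1 x
    -- pointwise bound
    have hpt : ∀ᵐ x ∂ρ, Real.sqrt (f n x) ≤
        Real.sqrt ((1 - g x) * f n x) + Real.sqrt (g x * f n x) := by
      filter_upwards [hf_nonneg n] with x hx
      have h1 : f n x = (1 - g x) * f n x + g x * f n x := by ring
      calc Real.sqrt (f n x) = Real.sqrt ((1 - g x) * f n x + g x * f n x) := by rw [← h1]
        _ ≤ _ := my_sqrt_add (mul_nonneg (by linarith [hgle1 x]) hx) (mul_nonneg (hgnn x) hx)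
    have hsqint : Integrable (fun x => Real.sqrt (f n x)) ρ :=
      my_integrable_sqrt (hf_meas n).aemeasurable (hf_nonneg n) (hf_int n)
    have hnn : 0 ≤ ∫ x, Real.sqrt (f n x) ∂ρ :=
      integral_nonneg fun x => Real.sqrt_nonneg _
    rw [Real.dist_eq, sub_zero, abs_of_nonneg hnn]
    have hsd : Real.sqrt δ = ε/4 := by
      rw [hδdef, show ε^2/16 = (ε/4)^2 by ring, Real.sqrt_sq (by positivity)]
    have hstep : ∫ x, Real.sqrt (f n x) ∂ρ ≤
        ∫ x, (Real.sqrt ((1 - g x) * f n x) + Real.sqrt (g x * f n x)) ∂ρ :=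
      integral_mono_ae hsqint
        ((my_integrable_sqrt humeas hu0 hui).add (my_integrable_sqrt hgfmeas hgf0 hgfi)) hpt
    have hsplit : ∫ x, (Real.sqrt ((1 - g x) * f n x) + Real.sqrt (g x * f n x)) ∂ρ
        = (∫ x, Real.sqrt ((1 - g x) * f n x) ∂ρ) + ∫ x, Real.sqrt (g x * f n x) ∂ρ :=
      integral_add (my_integrable_sqrt humeas hu0 hui) (my_integrable_sqrt hgfmeas hgf0 hgfi)
    have hterm1 : ∫ x, Real.sqrt ((1 - g x) * f n x) ∂ρ ≤ Real.sqrt (2*δ) := by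
      refine (my_jensen_sqrt humeas hu0 hui).trans (Real.sqrt_le_sqrt hbound.le)
    have hterm2 : ∫ x, Real.sqrt (g x * f n x) ∂ρ ≤ Real.sqrt δ := by
      have h1 : ∫ x, Real.sqrt (g x * f n x) ∂ρ = ∫ x, Real.sqrt (g x) * Real.sqrt (f n x) ∂ρ := by
        refine integral_congr_ae (Eventually.of_forall fun x => ?_)
        exact Real.sqrt_mul (hgnn x) _
      rw [h1]
      have h2 := my_real_cs g.continuous.measurable.aemeasurable (hf_meas n).aemeasurable
        (Eventually.of_forall hgnn) (hf_nonneg n) hgint_ρ (hf_int n)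
      rw [hf_prob n, Real.sqrt_one, mul_one] at h2
      exact h2.trans (Real.sqrt_le_sqrt hgρ)
    have h2d : Real.sqrt (2*δ) ≤ 2 * Real.sqrt δ := by
      calc Real.sqrt (2*δ) ≤ Real.sqrt (4*δ) := Real.sqrt_le_sqrt (by linarith)
        _ = 2 * Real.sqrt δ := by
            rw [show (4:ℝ)*δ = 2^2*δ by ring, Real.sqrt_mul (by positivity),
              Real.sqrt_sq (by norm_num)]
    calc ∫ x, Real.sqrt (f n x) ∂ρ
        ≤ (∫ x, Real.sqrt ((1 - g x) * f n x) ∂ρ) + ∫ x, Real.sqrt (g x * f n x) ∂ρ := by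
          rw [← hsplit]; exact hstep
      _ ≤ Real.sqrt (2*δ) + Real.sqrt δ := add_le_add hterm1 hterm2
      _ ≤ 3 * Real.sqrt δ := by linarith
      _ = 3 * (ε/4) := by rw [hsd]
      _ < ε := by linarith
  · -- reverse direction
    intro htend
    haveI : τ.HaveLebesgueDecomposition ρ := Measure.haveLebesgueDecomposition_of_sigmaFinite τ ρ
    rw [← Measure.rnDeriv_eq_zero τ ρ]
    set g := τ.rnDeriv ρ with hgdef
    have hgm : Measurable g := Measure.measurable_rnDeriv τ ρ
    have hgfin : ∀ᵐ x ∂ρ, g x < ⊤ := Measure.rnDeriv_lt_top τ ρ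
    set D := ∫⁻ x, g x ^ (1/2:ℝ) ∂ρ with hDdef
    suffices hD0 : D = 0 by
      have hm : Measurable (fun x => g x ^ (1/2:ℝ)) :=
        ENNReal.continuous_rpow_const.measurable.comp hgm
      have h := (lintegral_eq_zero_iff hm).mp hD0
      filter_upwards [h] with x hx
      simp only [Pi.zero_apply] at hx ⊢
      rcases ENNReal.rpow_eq_zero_iff.mp hx with ⟨h1, _⟩ | ⟨_, h2⟩
      · exact h1
      · norm_num at h2
    have key : ∀ n, D ≤ ((ENNReal.ofReal M) ^ (1/2:ℝ) * 1) ^ (1/2:ℝ) *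
        (ENNReal.ofReal (∫ x, Real.sqrt (f n x) ∂ρ)) ^ (1/2:ℝ) := by
      intro n
      set F := fun x => ENNReal.ofReal (f n x) with hFdef
      have hFm : Measurable F := (hf_meas n).ennreal_ofReal
      -- A bound
      have hA : ∫⁻ x, g x * (F x)⁻¹ ∂ρ ≤ ENNReal.ofReal M := by
        have h1 : ∫⁻ x, (F x)⁻¹ ∂(ρ.withDensity g) ≤ ∫⁻ x, (F x)⁻¹ ∂τ :=
          lintegral_mono' (Measure.withDensity_rnDeriv_le τ ρ) le_rfl
        have h2 : ∫⁻ x, (F x)⁻¹ ∂τ ≤ ENNReal.ofReal M := by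
          refine le_trans (le_of_eq (lintegral_congr_ae ?_)) (hM n)
          filter_upwards [hf_pos n] with x hx
          rw [ENNReal.ofReal_inv_of_pos hx]
        rw [lintegral_withDensity_eq_lintegral_mul ρ hgm (g := fun x => (F x)⁻¹) hFm.inv] at h1
        exact le_trans (le_of_eq (by simp [Pi.mul_apply])) (h1.trans h2)
      -- C bound
      have hC : ∫⁻ x, g x ∂ρ ≤ 1 := by
        refine (Measure.lintegral_rnDeriv_le).trans ?_
        simp
      -- positivity transfer
      have hpos : ∀ᵐ x ∂ρ, g x ≠ 0 → 0 < f n x := by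
        have hNm : MeasurableSet {x | ¬ (0 < f n x)} :=
          (measurableSet_lt measurable_const (hf_meas n)).compl
        have hτN : τ {x | ¬ (0 < f n x)} = 0 := ae_iff.mp (hf_pos n)
        have hwdN : ρ.withDensity g {x | ¬ (0 < f n x)} = 0 :=
          le_antisymm (le_trans (Measure.withDensity_rnDeriv_le τ ρ _) hτN.le) zero_le
        rw [withDensity_apply g hNm] at hwdN
        have h := (setLIntegral_eq_zero_iff hNm hgm).mp hwdN
        filter_upwards [h] with x hx hgx
        by_contra hcon
        exact hgx (hx hcon)
      -- B bound
      have hB : ∫⁻ x, g x * (F x) ^ (-(1/2):ℝ) ∂ρ ≤ (ENNReal.ofReal M) ^ (1/2:ℝ) * 1 := by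
        have hpt : ∀ᵐ x ∂ρ, g x * F x ^ (-(1/2):ℝ) ≤
            (g x * (F x)⁻¹) ^ (1/2:ℝ) * (g x) ^ (1/2:ℝ) := by
          filter_upwards [hgfin] with x hfin
          exact my_aux1 hfin.ne
        calc ∫⁻ x, g x * (F x) ^ (-(1/2):ℝ) ∂ρ
            ≤ ∫⁻ x, (g x * (F x)⁻¹) ^ (1/2:ℝ) * (g x) ^ (1/2:ℝ) ∂ρ := lintegral_mono_ae hpt
          _ ≤ (∫⁻ x, g x * (F x)⁻¹ ∂ρ) ^ (1/2:ℝ) * (∫⁻ x, g x ∂ρ) ^ (1/2:ℝ) :=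
              my_cs_lintegral _ _ (hgm.mul hFm.inv).aemeasurable hgm.aemeasurable
          _ ≤ (ENNReal.ofReal M) ^ (1/2:ℝ) * 1 := by
              refine mul_le_mul' (ENNReal.rpow_le_rpow hA (by norm_num)) ?_
              calc (∫⁻ x, g x ∂ρ) ^ (1/2:ℝ) ≤ (1:ℝ≥0∞) ^ (1/2:ℝ) :=
                  ENNReal.rpow_le_rpow hC (by norm_num)
                _ = 1 := ENNReal.one_rpow _
      -- D bound
      have hDn : D ≤ (∫⁻ x, g x * F x ^ (-(1/2):ℝ) ∂ρ) ^ (1/2:ℝ) *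
          (∫⁻ x, F x ^ (1/2:ℝ) ∂ρ) ^ (1/2:ℝ) := by
        have hpt : ∀ᵐ x ∂ρ, g x ^ (1/2:ℝ) ≤
            (g x * F x ^ (-(1/2):ℝ)) ^ (1/2:ℝ) * (F x ^ (1/2:ℝ)) ^ (1/2:ℝ) := by
          filter_upwards [hgfin, hpos] with x hfin hp
          refine my_aux2 hfin.ne ENNReal.ofReal_ne_top fun hgx => ?_
          simpa [hFdef, ENNReal.ofReal_eq_zero, not_le] using (hp hgx)
        refine le_trans (lintegral_mono_ae hpt) ?_
        exact my_cs_lintegral _ _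
          (hgm.mul (ENNReal.continuous_rpow_const.measurable.comp hFm)).aemeasurable
          (ENNReal.continuous_rpow_const.measurable.comp hFm).aemeasurable
      -- E rewrite
      have hE : ∫⁻ x, F x ^ (1/2:ℝ) ∂ρ = ENNReal.ofReal (∫ x, Real.sqrt (f n x) ∂ρ) :=
        my_lintegral_sqrt_eq (hf_meas n).aemeasurable (hf_nonneg n) (hf_int n)
      calc D ≤ (∫⁻ x, g x * F x ^ (-(1/2):ℝ) ∂ρ) ^ (1/2:ℝ) *
          (∫⁻ x, F x ^ (1/2:ℝ) ∂ρ) ^ (1/2:ℝ) := hDn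
        _ ≤ ((ENNReal.ofReal M) ^ (1/2:ℝ) * 1) ^ (1/2:ℝ) *
            (ENNReal.ofReal (∫ x, Real.sqrt (f n x) ∂ρ)) ^ (1/2:ℝ) := by
            rw [hE]
            exact mul_le_mul_left (ENNReal.rpow_le_rpow hB (by norm_num)) _
    have hc : (((ENNReal.ofReal M) ^ (1/2:ℝ) * 1 : ℝ≥0∞)) ^ (1/2:ℝ) ≠ ⊤ := by
      rw [mul_one]
      exact ENNReal.rpow_ne_top_of_nonneg (by norm_num)
        (ENNReal.rpow_ne_top_of_nonneg (by norm_num) ENNReal.ofReal_ne_top)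
    have h1 : Tendsto (fun n => ENNReal.ofReal (∫ x, Real.sqrt (f n x) ∂ρ)) atTop (𝓝 0) := by
      have := ENNReal.tendsto_ofReal htend
      simpa using this
    have hlim : Tendsto (fun n => ((ENNReal.ofReal M) ^ (1/2:ℝ) * 1) ^ (1/2:ℝ) *
        (ENNReal.ofReal (∫ x, Real.sqrt (f n x) ∂ρ)) ^ (1/2:ℝ)) atTop (𝓝 0) :=
      (ENNReal.tendsto_const_mul_rpow_nhds_zero_of_pos hc (by norm_num)).comp h1
    exact le_zero_iff.mp (ge_of_tendsto' hlim key)
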